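/- Let ℒ_γ be the space of sequences b = (b_n) of bounded operators with norm ‖b‖_γ = sup_{n≥0} (γⁿ/n!) ‖b_n‖, 0 < γ < 1. Suppose a linear map V acts by (Vb)_s = ∑_{n=0}^{s} (1/n!) ∑_{j₁≠…≠j_n} A_{1+n}(t) applied to b_{s−n} ⊗ identities, with ‖A_{1+n}(t) c‖ ≤ n! e^{n+2} ‖c‖. If γ < e^{−1}, then ‖Vb‖_γ ≤ e² (1 − γe)^{−1} ‖b‖_γ. -/

import Mathlib

open Nat

/-- Norm estimate for the reduced-observable solution expansion.  On the space `ℒ_γ` of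
sequences `b = (b_n)` with norm `‖b‖_γ = sup_n (γⁿ/n!) ‖b_n‖` (`0 < γ < 1`), the map
`(Vb)_s = ∑_{n=0}^{s} (1/n!) ∑_{j₁ ≠ … ≠ j_n} A_{1+n}(t)(b_{s−n} ⊗ 𝟙)`, with generating
operators bounded by `‖A_{1+n}(t) c‖ ≤ n! e^{n+2} ‖c‖` (the inner sum runs over the
`s!/(s−n)!` tuples of distinct indices, modelled by embeddings `Fin n ↪ Fin s`),
satisfies `‖Vb‖_γ ≤ e² (1 − γe)⁻¹ ‖b‖_γ` whenever `γ < e⁻¹`. -/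
theorem statement15 (X : ℕ → Type*) [∀ n, NormedAddCommGroup (X n)]
    [∀ n, NormedSpace ℝ (X n)]
    (γ : ℝ) (hγ0 : 0 < γ) (hγ1 : γ < 1) (hγe : γ < (Real.exp 1)⁻¹)
    (A : ∀ s n : ℕ, (Fin n ↪ Fin s) → (X (s - n) →ₗ[ℝ] X s))
    (hA : ∀ (s n : ℕ) (j : Fin n ↪ Fin s) (c : X (s - n)),
      ‖A s n j c‖ ≤ n ! * Real.exp (n + 2) * ‖c‖)
    (b : ∀ n, X n)
    (hb : BddAbove (Set.range fun n => γ ^ n / n ! * ‖b n‖)) :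
    (⨆ s : ℕ, γ ^ s / s ! *
        ‖∑ n ∈ Finset.range (s + 1),
            ((n ! : ℝ)⁻¹) • ∑ j : Fin n ↪ Fin s, A s n j (b (s - n))‖)
      ≤ Real.exp 2 * (1 - γ * Real.exp 1)⁻¹ * ⨆ n : ℕ, γ ^ n / n ! * ‖b n‖ := by
  set M : ℝ := ⨆ n : ℕ, γ ^ n / n ! * ‖b n‖ with hM
  set r : ℝ := γ * Real.exp 1 with hr
  have hr0 : 0 ≤ r := by positivity
  have hr1 : r < 1 := by
    have := (mul_lt_mul_of_pos_right hγe (Real.exp_pos 1))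
    rwa [inv_mul_cancel₀ (Real.exp_pos 1).ne'] at this
  have hMle : ∀ m : ℕ, γ ^ m / m ! * ‖b m‖ ≤ M := fun m => le_ciSup hb m
  have hM0 : 0 ≤ M := le_trans (by positivity) (hMle 0)
  apply ciSup_le
  intro s
  -- bound for each s
  have key : ∀ n ∈ Finset.range (s + 1),
      γ ^ s / s ! * (((n ! : ℝ)⁻¹) * ‖∑ j : Fin n ↪ Fin s, A s n j (b (s - n))‖)
        ≤ r ^ n * (Real.exp 2 * M) := by
    intro n hn
    have hns : n ≤ s := Nat.lt_succ_iff.mp (Finset.mem_range.mp hn)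
    have hcard : (Fintype.card (Fin n ↪ Fin s) : ℝ) = (s.descFactorial n : ℝ) := by
      rw [Fintype.card_embedding_eq, Fintype.card_fin, Fintype.card_fin]
    have hbound : ‖∑ j : Fin n ↪ Fin s, A s n j (b (s - n))‖
        ≤ (s.descFactorial n : ℝ) * (n ! * Real.exp (n + 2) * ‖b (s - n)‖) := by
      calc ‖∑ j : Fin n ↪ Fin s, A s n j (b (s - n))‖
          ≤ ∑ j : Fin n ↪ Fin s, ‖A s n j (b (s - n))‖ := norm_sum_le _ _
        _ ≤ ∑ _j : Fin n ↪ Fin s, (n ! * Real.exp (n + 2) * ‖b (s - n)‖) :=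
            Finset.sum_le_sum fun j _ => hA s n j (b (s - n))
        _ = (Fintype.card (Fin n ↪ Fin s) : ℝ) * (n ! * Real.exp (n + 2) * ‖b (s - n)‖) := by
            rw [Finset.sum_const, Finset.card_univ, nsmul_eq_mul]
        _ = (s.descFactorial n : ℝ) * (n ! * Real.exp (n + 2) * ‖b (s - n)‖) := by rw [hcard]
    have hfac : ((s - n)! : ℝ) * (s.descFactorial n : ℝ) = (s ! : ℝ) := by
      exact_mod_cast congrArg (Nat.cast : ℕ → ℝ) (Nat.factorial_mul_descFactorial hns)
    have hexp : Real.exp ((n : ℝ) + 2) = Real.exp 1 ^ n * Real.exp 2 := by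
      rw [Real.exp_add, ← Real.exp_one_rpow (n : ℝ), Real.rpow_natCast]
    have hγpow : γ ^ s = γ ^ n * γ ^ (s - n) := by
      rw [← pow_add, Nat.add_sub_cancel' hns]
    have step : γ ^ s / s ! * (((n ! : ℝ)⁻¹) * ((s.descFactorial n : ℝ) *
        (n ! * Real.exp (n + 2) * ‖b (s - n)‖)))
        = r ^ n * (Real.exp 2 * (γ ^ (s - n) / (s - n)! * ‖b (s - n)‖)) := by
      have hn0 : (n ! : ℝ) ≠ 0 := by positivity
      have hs0 : (s ! : ℝ) ≠ 0 := by positivity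
      have hsn0 : (((s - n)! : ℕ) : ℝ) ≠ 0 := by positivity
      field_simp
      rw [hexp, hγpow, hr, mul_pow]
      rw [← hfac]
      ring
    calc γ ^ s / s ! * (((n ! : ℝ)⁻¹) * ‖∑ j : Fin n ↪ Fin s, A s n j (b (s - n))‖)
        ≤ γ ^ s / s ! * (((n ! : ℝ)⁻¹) * ((s.descFactorial n : ℝ) *
            (n ! * Real.exp (n + 2) * ‖b (s - n)‖))) := by
          have h1 : (0:ℝ) ≤ γ ^ s / s ! := by positivity
          have h2 : (0:ℝ) ≤ (n ! : ℝ)⁻¹ := by positivity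
          exact mul_le_mul_of_nonneg_left (mul_le_mul_of_nonneg_left hbound h2) h1
      _ = r ^ n * (Real.exp 2 * (γ ^ (s - n) / (s - n)! * ‖b (s - n)‖)) := step
      _ ≤ r ^ n * (Real.exp 2 * M) := by
          have := hMle (s - n)
          have h2 : (0:ℝ) ≤ Real.exp 2 := (Real.exp_pos 2).le
          exact mul_le_mul_of_nonneg_left (mul_le_mul_of_nonneg_left this h2)
            (pow_nonneg hr0 n)
  calc γ ^ s / s ! * ‖∑ n ∈ Finset.range (s + 1),
          ((n ! : ℝ)⁻¹) • ∑ j : Fin n ↪ Fin s, A s n j (b (s - n))‖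
      ≤ γ ^ s / s ! * ∑ n ∈ Finset.range (s + 1),
          ((n ! : ℝ)⁻¹) * ‖∑ j : Fin n ↪ Fin s, A s n j (b (s - n))‖ := by
        apply mul_le_mul_of_nonneg_left _ (by positivity)
        refine le_trans (norm_sum_le _ _) (Finset.sum_le_sum fun n _ => ?_)
        rw [norm_smul, norm_inv, Real.norm_natCast]
    _ = ∑ n ∈ Finset.range (s + 1), γ ^ s / s ! *
          (((n ! : ℝ)⁻¹) * ‖∑ j : Fin n ↪ Fin s, A s n j (b (s - n))‖) := by
        rw [Finset.mul_sum]
    _ ≤ ∑ n ∈ Finset.range (s + 1), r ^ n * (Real.exp 2 * M) :=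
        Finset.sum_le_sum key
    _ = (∑ n ∈ Finset.range (s + 1), r ^ n) * (Real.exp 2 * M) := by
        rw [← Finset.sum_mul]
    _ ≤ (1 - r)⁻¹ * (Real.exp 2 * M) := by
        apply mul_le_mul_of_nonneg_right _ (by positivity)
        have hsum : ∑ n ∈ Finset.range (s + 1), r ^ n ≤ ∑' n : ℕ, r ^ n :=
          Summable.sum_le_tsum _ (fun i _ => pow_nonneg hr0 i)
            (summable_geometric_of_lt_one hr0 hr1)
        rwa [tsum_geometric_of_lt_one hr0 hr1] at hsum
    _ = Real.exp 2 * (1 - r)⁻¹ * M := by ring
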